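/- Fix an adjacency parameter A ∈ ℕ with A ≥ 1, a privacy parameter ε ≥ 0, and N ∈ ℕ. Let p = 1 / (1 + exp(−ε/A)). Then for every d ∈ {0, 1, …, N}, p^{N − d} · (1 − p)^{d} = exp(−εd/A) / (1 + exp(−ε/A))^{N}. Consequently, the modified Erdős–Rényi model with edge probabilities p for edges of the input graph and 1 − p for non-edges assigns to every candidate output graph H exactly the same probability as the graph exponential mechanism (taking N = C(n,2) and d = d_Δ(E(G), E(H))), so the two mechanisms define the same distribution over graphs on n nodes. -/

import Mathlib

/-- The set `K_n` of all `C(n,2)` unordered pairs of distinct nodes of `Fin n`.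
A simple undirected graph on `n` nodes is identified with its edge set, a subset of `Kn n`. -/
def Kn (n : ℕ) : Finset (Sym2 (Fin n)) := Finset.univ.filter (fun e => ¬ e.IsDiag)

lemma Kn_card (n : ℕ) : (Kn n).card = n.choose 2 := by
  have := Sym2.card_subtype_not_diag (α := Fin n)
  rw [Fintype.card_subtype] at this
  simpa [Kn] using this

/-- **Equivalence of the modified Erdős–Rényi model and the graph exponential mechanism.**
Fix an adjacency parameter `A ≥ 1`, a privacy parameter `ε ≥ 0`, and `N ∈ ℕ`, and let
`p = 1/(1 + exp(−ε/A))`. Then for every `d ∈ {0,…,N}`,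
`p^(N−d) · (1−p)^d = exp(−εd/A) / (1 + exp(−ε/A))^N`. Consequently, the modified
Erdős–Rényi model assigns to every candidate output graph `H` exactly the probability
that the graph exponential mechanism does (taking `N = C(n,2)` and
`d = d_Δ(E(G), E(H))`), so the two mechanisms define the same distribution. -/
theorem modified_ER_eq_graph_exp_mech (A : ℕ) (hA : 1 ≤ A) (ε : ℝ) (hε : 0 ≤ ε)
    (N : ℕ) (p : ℝ) (hp : p = 1 / (1 + Real.exp (-ε / A))) :
    (∀ d : ℕ, d ≤ N →
        p ^ (N - d) * (1 - p) ^ d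
          = Real.exp (-ε * d / A) / (1 + Real.exp (-ε / A)) ^ N)
    ∧ (∀ n : ℕ, ∀ G H : Finset (Sym2 (Fin n)), G ⊆ Kn n → H ⊆ Kn n →
        p ^ (n.choose 2 - (symmDiff G H).card) * (1 - p) ^ (symmDiff G H).card
          = Real.exp (-ε * ((symmDiff G H).card : ℝ) / A)
              / (1 + Real.exp (-ε / A)) ^ n.choose 2) := by
  have hpos : (0:ℝ) < 1 + Real.exp (-ε / A) := by positivity
  have key : ∀ d N : ℕ, d ≤ N →
      p ^ (N - d) * (1 - p) ^ d
        = Real.exp (-ε * d / A) / (1 + Real.exp (-ε / A)) ^ N := by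
    intro d N hd
    have h1p : 1 - p = Real.exp (-ε / A) / (1 + Real.exp (-ε / A)) := by
      rw [hp]; field_simp; ring
    rw [h1p, hp, div_pow, div_pow, one_pow, div_mul_div_comm, one_mul,
      ← pow_add, Nat.sub_add_cancel hd, ← Real.exp_nat_mul]
    congr 1
    push_cast
    ring
  refine ⟨fun d hd => key d N hd, fun n G H hG hH => ?_⟩
  refine key _ _ ?_
  rw [← Kn_card]
  exact Finset.card_le_card (fun x hx => by
    rcases Finset.mem_symmDiff.mp hx with ⟨h, _⟩ | ⟨h, _⟩
    exacts [hG h, hH h])
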